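/- arXiv:0809.3921 — 5 statements merged into one kernel-verified Lean document; each statement's English description precedes it below -/
import Mathlib

section
/- For every ξ, η ∈ ℝ^{2×2} it holds that W(ξ+η) − W(ξ) − W′(ξ)(η) ≥ ((det ξ − y)/W(ξ))·det η, where W′(ξ) denotes the Fréchet derivative of W at ξ. -/
open Matrix Filter Topology

attribute [local instance] Matrix.frobeniusSeminormedAddCommGroup
  Matrix.frobeniusNormedAddCommGroup Matrix.frobeniusNormedSpace

abbrev M2 := Matrix (Fin 2) (Fin 2) ℝ

noncomputable section

def E11 : M2 := Matrix.single 0 0 1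

def E22 : M2 := Matrix.single 1 1 1

/-- `[ξ]`: the matrix `ξ` with its `(1,1)` entry replaced by `0`. -/
def br (ξ : M2) : M2 := ξ - ξ 0 0 • E11

/-- `W(ξ) = √(‖[ξ]‖² + (det ξ − y)²)` with the Frobenius norm. -/
def Wf (y : ℝ) (ξ : M2) : ℝ := Real.sqrt (‖br ξ‖ ^ 2 + (ξ.det - y) ^ 2)

end

noncomputable section

def eL (i j : Fin 2) : M2 →ₗ[ℝ] ℝ :=
  { toFun := fun ξ => ξ i j
    map_add' := fun _ _ => rfl
    map_smul' := fun _ _ => rfl }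

def eCLM (i j : Fin 2) : M2 →L[ℝ] ℝ := (eL i j).toContinuousLinearMap

end

lemma norm_br_sq (ξ : M2) :
    ‖br ξ‖ ^ 2 = (ξ 0 1) ^ 2 + (ξ 1 0) ^ 2 + (ξ 1 1) ^ 2 := by
  have h0 : br ξ 0 0 = 0 := by
    simp [br, E11, Matrix.single]
  have h1 : br ξ 0 1 = ξ 0 1 := by
    simp [br, E11, Matrix.single]
  have h2 : br ξ 1 0 = ξ 1 0 := by
    simp [br, E11, Matrix.single]
  have h3 : br ξ 1 1 = ξ 1 1 := by
    simp [br, E11, Matrix.single]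
  rw [Matrix.frobenius_norm_def]
  rw [← Real.rpow_natCast _ 2, ← Real.rpow_mul (by positivity)]
  norm_num
  rw [h0, h1, h2, h3]
  ring

lemma A_pos (y : ℝ) (hy : 0 < y) (a b c d : ℝ) :
    0 < b*b + c*c + d*d + (a*d-b*c-y)*(a*d-b*c-y) := by
  by_cases h : b = 0 ∧ c = 0 ∧ d = 0
  · obtain ⟨hb, hc, hd⟩ := h; subst hb; subst hc; subst hd; nlinarith
  · have h3 : 0 < b*b + c*c + d*d := by
      by_contra hle
      push_neg at hle
      refine h ⟨?_, ?_, ?_⟩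
      · have hb2 : b*b ≤ 0 := by nlinarith [mul_self_nonneg c, mul_self_nonneg d]
        exact mul_self_eq_zero.mp (le_antisymm hb2 (mul_self_nonneg _))
      · have hc2 : c*c ≤ 0 := by nlinarith [mul_self_nonneg b, mul_self_nonneg d]
        exact mul_self_eq_zero.mp (le_antisymm hc2 (mul_self_nonneg _))
      · have hd2 : d*d ≤ 0 := by nlinarith [mul_self_nonneg b, mul_self_nonneg c]
        exact mul_self_eq_zero.mp (le_antisymm hd2 (mul_self_nonneg _))
    nlinarith [mul_self_nonneg (a*d-b*c-y)]

lemma step (A B P T N D : ℝ) (hA : 0 < A) (hP : P^2 ≤ A*B)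
    (hid : A + T/2 + D*N = P) :
    Real.sqrt B - Real.sqrt A - 1/(2*Real.sqrt A) * T ≥ D/Real.sqrt A * N := by
  have hsApos : 0 < Real.sqrt A := Real.sqrt_pos.mpr hA
  have hne : Real.sqrt A ≠ 0 := hsApos.ne'
  have hAA : Real.sqrt A * Real.sqrt A = A := Real.mul_self_sqrt hA.le
  have key : P ≤ Real.sqrt A * Real.sqrt B := by
    rcases le_or_gt P 0 with h | h
    · have h0 : 0 ≤ Real.sqrt A * Real.sqrt B := by positivity
      linarith
    · calc P = Real.sqrt (P^2) := (Real.sqrt_sq h.le).symm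
        _ ≤ Real.sqrt (A*B) := Real.sqrt_le_sqrt hP
        _ = Real.sqrt A * Real.sqrt B := Real.sqrt_mul hA.le B
  rw [ge_iff_le, div_mul_eq_mul_div, div_le_iff₀ hsApos]
  have h3 : 1/(2*Real.sqrt A)*T*Real.sqrt A = T/2 := by
    field_simp
  have h2 : (Real.sqrt B - Real.sqrt A - 1/(2*Real.sqrt A)*T) * Real.sqrt A
      = Real.sqrt B * Real.sqrt A - A - T/2 := by
    rw [sub_mul, sub_mul, hAA, h3]
  rw [h2]
  have hcomm : Real.sqrt A * Real.sqrt B = Real.sqrt B * Real.sqrt A := mul_comm _ _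
  linarith [key]

set_option maxHeartbeats 1000000 in
lemma final (y a b c d p q r s : ℝ)
    (hA : 0 < b*b + c*c + d*d + (a*d-b*c-y)*(a*d-b*c-y)) :
    Real.sqrt ((b+q)*(b+q) + (c+r)*(c+r) + (d+s)*(d+s) +
        ((a+p)*(d+s)-(b+q)*(c+r)-y)*((a+p)*(d+s)-(b+q)*(c+r)-y))
      - Real.sqrt (b*b + c*c + d*d + (a*d-b*c-y)*(a*d-b*c-y))
      - 1/(2*Real.sqrt (b*b + c*c + d*d + (a*d-b*c-y)*(a*d-b*c-y))) *
        (2*b*q + 2*c*r + 2*d*s + 2*(a*d-b*c-y)*(a*s + d*p - (b*r + c*q)))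
      ≥ (a*d-b*c-y)/Real.sqrt (b*b + c*c + d*d + (a*d-b*c-y)*(a*d-b*c-y)) * (p*s-q*r) := by
  refine step _ _ (b*(b+q)+c*(c+r)+d*(d+s)+(a*d-b*c-y)*((a+p)*(d+s)-(b+q)*(c+r)-y))
      _ _ _ hA ?_ (by ring)
  have hlag : (b*b + c*c + d*d + (a*d-b*c-y)*(a*d-b*c-y)) *
      ((b+q)*(b+q) + (c+r)*(c+r) + (d+s)*(d+s) +
        ((a+p)*(d+s)-(b+q)*(c+r)-y)*((a+p)*(d+s)-(b+q)*(c+r)-y))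
      - (b*(b+q)+c*(c+r)+d*(d+s)+(a*d-b*c-y)*((a+p)*(d+s)-(b+q)*(c+r)-y))^2
      = (b*(c+r)-c*(b+q))^2 + (b*(d+s)-d*(b+q))^2
        + (b*((a+p)*(d+s)-(b+q)*(c+r)-y)-(a*d-b*c-y)*(b+q))^2
        + (c*(d+s)-d*(c+r))^2
        + (c*((a+p)*(d+s)-(b+q)*(c+r)-y)-(a*d-b*c-y)*(c+r))^2
        + (d*((a+p)*(d+s)-(b+q)*(c+r)-y)-(a*d-b*c-y)*(d+s))^2 := by
    ring
  linarith [hlag, sq_nonneg (b*(c+r)-c*(b+q)), sq_nonneg (b*(d+s)-d*(b+q)),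
      sq_nonneg (b*((a+p)*(d+s)-(b+q)*(c+r)-y)-(a*d-b*c-y)*(b+q)),
      sq_nonneg (c*(d+s)-d*(c+r)),
      sq_nonneg (c*((a+p)*(d+s)-(b+q)*(c+r)-y)-(a*d-b*c-y)*(c+r)),
      sq_nonneg (d*((a+p)*(d+s)-(b+q)*(c+r)-y)-(a*d-b*c-y)*(d+s))]

/-- For every ξ, η ∈ ℝ^{2×2}:
W(ξ+η) − W(ξ) − W′(ξ)(η) ≥ ((det ξ − y)/W(ξ)) · det η. -/
theorem stmt_0 (y : ℝ) (hy : 0 < y) (ξ η : M2) :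
    Wf y (ξ + η) - Wf y ξ - fderiv ℝ (Wf y) ξ η ≥ ((ξ.det - y) / Wf y ξ) * η.det := by
  have hWeq : Wf y = fun m : M2 =>
      Real.sqrt (m 0 1 * m 0 1 + m 1 0 * m 1 0 + m 1 1 * m 1 1 +
        (m 0 0 * m 1 1 - m 0 1 * m 1 0 - y) * (m 0 0 * m 1 1 - m 0 1 * m 1 0 - y)) := by
    funext m
    rw [Wf, norm_br_sq, Matrix.det_fin_two]
    congr 1
    ring
  have hA : 0 < ξ 0 1 * ξ 0 1 + ξ 1 0 * ξ 1 0 + ξ 1 1 * ξ 1 1 +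
      (ξ 0 0 * ξ 1 1 - ξ 0 1 * ξ 1 0 - y) * (ξ 0 0 * ξ 1 1 - ξ 0 1 * ξ 1 0 - y) :=
    A_pos y hy _ _ _ _
  have fa : HasFDerivAt (fun m : M2 => m 0 0) (eCLM 0 0) ξ := (eCLM 0 0).hasFDerivAt
  have fb : HasFDerivAt (fun m : M2 => m 0 1) (eCLM 0 1) ξ := (eCLM 0 1).hasFDerivAt
  have fc : HasFDerivAt (fun m : M2 => m 1 0) (eCLM 1 0) ξ := (eCLM 1 0).hasFDerivAt
  have fd : HasFDerivAt (fun m : M2 => m 1 1) (eCLM 1 1) ξ := (eCLM 1 1).hasFDerivAt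
  have hdet := ((fa.mul fd).sub (fb.mul fc)).sub_const y
  have hQ := (((fb.mul fb).add (fc.mul fc)).add (fd.mul fd)).add (hdet.mul hdet)
  have hW := (Real.hasDerivAt_sqrt (ne_of_gt hA)).comp_hasFDerivAt ξ hQ
  have hval : fderiv ℝ (Wf y) ξ η =
      1/(2*Real.sqrt (ξ 0 1 * ξ 0 1 + ξ 1 0 * ξ 1 0 + ξ 1 1 * ξ 1 1 +
        (ξ 0 0 * ξ 1 1 - ξ 0 1 * ξ 1 0 - y) * (ξ 0 0 * ξ 1 1 - ξ 0 1 * ξ 1 0 - y))) *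
      (2*ξ 0 1*η 0 1 + 2*ξ 1 0*η 1 0 + 2*ξ 1 1*η 1 1 +
        2*(ξ 0 0 * ξ 1 1 - ξ 0 1 * ξ 1 0 - y)*(ξ 0 0*η 1 1 + ξ 1 1*η 0 0 - (ξ 0 1*η 1 0 + ξ 1 0*η 0 1))) := by
    have hW' : HasFDerivAt (fun m : M2 =>
        Real.sqrt (m 0 1 * m 0 1 + m 1 0 * m 1 0 + m 1 1 * m 1 1 +
          (m 0 0 * m 1 1 - m 0 1 * m 1 0 - y) * (m 0 0 * m 1 1 - m 0 1 * m 1 0 - y))) _ ξ := hW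
    rw [hWeq, hW'.fderiv]
    change (1 / (2 * Real.sqrt (ξ 0 1 * ξ 0 1 + ξ 1 0 * ξ 1 0 + ξ 1 1 * ξ 1 1 + (ξ 0 0 * ξ 1 1 - ξ 0 1 * ξ 1 0 - y) * (ξ 0 0 * ξ 1 1 - ξ 0 1 * ξ 1 0 - y)))) *
        (ξ 0 1 * η 0 1 + ξ 0 1 * η 0 1 + (ξ 1 0 * η 1 0 + ξ 1 0 * η 1 0) + (ξ 1 1 * η 1 1 + ξ 1 1 * η 1 1) +
          ((ξ 0 0 * ξ 1 1 - ξ 0 1 * ξ 1 0 - y) * (ξ 0 0 * η 1 1 + ξ 1 1 * η 0 0 - (ξ 0 1 * η 1 0 + ξ 1 0 * η 0 1)) + (ξ 0 0 * ξ 1 1 - ξ 0 1 * ξ 1 0 - y) * (ξ 0 0 * η 1 1 + ξ 1 1 * η 0 0 - (ξ 0 1 * η 1 0 + ξ 1 0 * η 0 1)))) = _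
    ring
  rw [hval]
  simp only [hWeq, Matrix.add_apply, Matrix.det_fin_two]
  exact final y (ξ 0 0) (ξ 0 1) (ξ 1 0) (ξ 1 1) (η 0 0) (η 0 1) (η 1 0) (η 1 1) hA
end

section
/- W is Fréchet differentiable at every ξ ∈ ℝ^{2×2}. -/
open Matrix Filter Topology

attribute [local instance] Matrix.frobeniusSeminormedAddCommGroup
  Matrix.frobeniusNormedAddCommGroup Matrix.frobeniusNormedSpace

lemma frob_sq (A : M2) : ‖A‖ ^ 2 = A 0 0 ^ 2 + A 0 1 ^ 2 + A 1 0 ^ 2 + A 1 1 ^ 2 := by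
  have h := Matrix.frobenius_norm_def A
  rw [h, ← Real.rpow_natCast _ 2, ← Real.rpow_mul (by positivity)]
  norm_num
  ring

lemma entry_lin (i j : Fin 2) : IsBoundedLinearMap ℝ (fun ξ : M2 => ξ i j) := by
  refine ⟨⟨fun a b => rfl, fun c a => rfl⟩, 1, one_pos, fun ξ => ?_⟩
  rw [one_mul]
  have h1 : ‖ξ i j‖ ^ 2 ≤ ‖ξ‖ ^ 2 := by
    rw [frob_sq]
    fin_cases i <;> fin_cases j <;> simp [Real.norm_eq_abs, sq_abs] <;>
      nlinarith [sq_nonneg (ξ 0 0), sq_nonneg (ξ 0 1), sq_nonneg (ξ 1 0), sq_nonneg (ξ 1 1)]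
  calc ‖ξ i j‖ = Real.sqrt (‖ξ i j‖ ^ 2) := (Real.sqrt_sq (norm_nonneg _)).symm
    _ ≤ Real.sqrt (‖ξ‖ ^ 2) := Real.sqrt_le_sqrt h1
    _ = ‖ξ‖ := Real.sqrt_sq (norm_nonneg _)

lemma entry_diff (i j : Fin 2) : Differentiable ℝ (fun ξ : M2 => ξ i j) :=
  (entry_lin i j).differentiable

lemma br_apply (ξ : M2) : br ξ 0 1 = ξ 0 1 ∧ br ξ 1 0 = ξ 1 0 ∧ br ξ 1 1 = ξ 1 1 ∧ br ξ 0 0 = 0 := by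
  simp [br, E11, Matrix.single]

/-- W is Fréchet differentiable at every ξ ∈ ℝ^{2×2}. -/
theorem stmt_2 (y : ℝ) (hy : 0 < y) (ξ : M2) :
    DifferentiableAt ℝ (Wf y) ξ := by
  have hW : Wf y = fun ξ : M2 => Real.sqrt
      ((ξ 0 1 ^ 2 + ξ 1 0 ^ 2 + ξ 1 1 ^ 2) + (ξ 0 0 * ξ 1 1 - ξ 0 1 * ξ 1 0 - y) ^ 2) := by
    funext η
    have h := br_apply η
    rw [Wf, frob_sq, Matrix.det_fin_two, h.1, h.2.1, h.2.2.1, h.2.2.2]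
    ring_nf
  rw [hW]
  set g : M2 → ℝ := fun ξ => (ξ 0 1 ^ 2 + ξ 1 0 ^ 2 + ξ 1 1 ^ 2) + (ξ 0 0 * ξ 1 1 - ξ 0 1 * ξ 1 0 - y) ^ 2 with hg
  have hgd : DifferentiableAt ℝ g ξ := by
    apply DifferentiableAt.add
    · exact (((entry_diff 0 1 ξ).pow 2).add ((entry_diff 1 0 ξ).pow 2)).add ((entry_diff 1 1 ξ).pow 2)
    · exact (((((entry_diff 0 0 ξ).mul (entry_diff 1 1 ξ)).sub ((entry_diff 0 1 ξ).mul (entry_diff 1 0 ξ))).sub (differentiableAt_const y)).pow 2)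
  have hpos : g ξ ≠ 0 := by
    have h0 : 0 < g ξ := by
      rcases eq_or_ne (ξ 0 1) 0 with h1 | h1
      · rcases eq_or_ne (ξ 1 0) 0 with h2 | h2
        · rcases eq_or_ne (ξ 1 1) 0 with h3 | h3
          · simp only [hg, h1, h2, h3]
            nlinarith [hy]
          · positivity
        · positivity
      · positivity
    exact h0.ne'
  exact hgd.sqrt hpos
end

section
/- For every ξ₀ ∈ ℝ^{2×2}, the affine function a : ℝ^{2×2} × ℝ → ℝ defined by a(A, t) := ([A]·[ξ₀] + (t − y)(det ξ₀ − y))/W(ξ₀) satisfies a(A, det A) ≤ W(A) for all A ∈ ℝ^{2×2}, with equality a(ξ₀, det ξ₀) = W(ξ₀). -/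
open Matrix Filter Topology

attribute [local instance] Matrix.frobeniusSeminormedAddCommGroup
  Matrix.frobeniusNormedAddCommGroup Matrix.frobeniusNormedSpace

lemma norm_sq_eq_sum (A : M2) : ‖A‖ ^ 2 = ∑ i : Fin 2, ∑ j : Fin 2, (A i j) ^ 2 := by
  rw [Matrix.frobenius_norm_def]
  rw [← Real.rpow_natCast _ 2, ← Real.rpow_mul (by positivity)]
  norm_num

lemma trace_eq_sum (A B : M2) : (Aᵀ * B).trace = ∑ i : Fin 2, ∑ j : Fin 2, A i j * B i j := by
  simp [Matrix.trace, Matrix.diag, Matrix.mul_apply, Matrix.transpose_apply, Fin.sum_univ_two]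
  ring

lemma cs (A B : M2) : (Aᵀ * B).trace ≤ ‖A‖ * ‖B‖ := by
  have hA := norm_sq_eq_sum A
  have hB := norm_sq_eq_sum B
  rw [trace_eq_sum]
  simp only [Fin.sum_univ_two] at hA hB ⊢
  have hpA : (0:ℝ) ≤ ‖A‖ := norm_nonneg _
  have hpB : (0:ℝ) ≤ ‖B‖ := norm_nonneg _
  have key : (A 0 0 * B 0 0 + A 0 1 * B 0 1 + (A 1 0 * B 1 0 + A 1 1 * B 1 1)) ^ 2
      ≤ (‖A‖ * ‖B‖) ^ 2 := by
    rw [mul_pow, hA, hB]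
    nlinarith [sq_nonneg (A 0 0 * B 0 1 - A 0 1 * B 0 0),
      sq_nonneg (A 0 0 * B 1 0 - A 1 0 * B 0 0),
      sq_nonneg (A 0 0 * B 1 1 - A 1 1 * B 0 0),
      sq_nonneg (A 0 1 * B 1 0 - A 1 0 * B 0 1),
      sq_nonneg (A 0 1 * B 1 1 - A 1 1 * B 0 1),
      sq_nonneg (A 1 0 * B 1 1 - A 1 1 * B 1 0)]
  nlinarith [key, mul_nonneg hpA hpB]

lemma Wf_pos (y : ℝ) (hy : 0 < y) (ξ : M2) : 0 < Wf y ξ := by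
  rw [Wf]
  apply Real.sqrt_pos.2
  rcases eq_or_ne (ξ.det - y) 0 with h | h
  · have hdet : ξ.det = y := by linarith [sub_eq_zero.1 h]
    have hbr : br ξ ≠ 0 := by
      intro hb
      have h01 : ξ 0 1 = 0 := by
        have := congrFun (congrFun hb 0) 1
        simpa [br, E11, Matrix.single] using this
      have h10 : ξ 1 0 = 0 := by
        have := congrFun (congrFun hb 1) 0
        simpa [br, E11, Matrix.single] using this
      have h11 : ξ 1 1 = 0 := by
        have := congrFun (congrFun hb 1) 1
        simpa [br, E11, Matrix.single] using this
      have : ξ.det = 0 := by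
        rw [Matrix.det_fin_two, h01, h10, h11]; ring
      rw [hdet] at this; linarith
    have : 0 < ‖br ξ‖ := norm_pos_iff.2 hbr
    positivity
  · have : 0 < (ξ.det - y) ^ 2 := by positivity
    nlinarith [sq_nonneg ‖br ξ‖]

/-- The affine map a(A, t) := ([A]·[ξ₀] + (t − y)(det ξ₀ − y)) / W(ξ₀) satisfies
a(A, det A) ≤ W(A) for all A, with equality at A = ξ₀. -/
theorem stmt_6 (y : ℝ) (hy : 0 < y) (ξ₀ : M2)
    (a : M2 × ℝ → ℝ)
    (ha : ∀ p : M2 × ℝ,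
      a p = (((br p.1)ᵀ * br ξ₀).trace + (p.2 - y) * (ξ₀.det - y)) / Wf y ξ₀) :
    (∀ A : M2, a (A, A.det) ≤ Wf y A) ∧ a (ξ₀, ξ₀.det) = Wf y ξ₀ := by
  have hW0 := Wf_pos y hy ξ₀
  constructor
  · intro A
    rw [ha]
    rw [div_le_iff₀ hW0]
    have hcs := cs (br A) (br ξ₀)
    set s := ((br A)ᵀ * br ξ₀).trace
    set p := ‖br A‖
    set q := ‖br ξ₀‖
    set u := A.det - y
    set v := ξ₀.det - y
    have hp : 0 ≤ p := norm_nonneg _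
    have hq : 0 ≤ q := norm_nonneg _
    have hWA : Wf y A = Real.sqrt (p ^ 2 + u ^ 2) := rfl
    have hWx : Wf y ξ₀ = Real.sqrt (q ^ 2 + v ^ 2) := rfl
    have hXnn : 0 ≤ Real.sqrt (p ^ 2 + u ^ 2) := Real.sqrt_nonneg _
    have hYnn : 0 ≤ Real.sqrt (q ^ 2 + v ^ 2) := Real.sqrt_nonneg _
    have hX2 : (Real.sqrt (p ^ 2 + u ^ 2)) ^ 2 = p ^ 2 + u ^ 2 :=
      Real.sq_sqrt (by positivity)
    have hY2 : (Real.sqrt (q ^ 2 + v ^ 2)) ^ 2 = q ^ 2 + v ^ 2 :=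
      Real.sq_sqrt (by positivity)
    rw [hWA, hWx]
    nlinarith [sq_nonneg (p * v - q * u), mul_nonneg hXnn hYnn, sq_nonneg (Real.sqrt (p^2+u^2) * Real.sqrt (q^2+v^2) - (p*q + u*v))]
  · rw [ha]
    have htr : ((br ξ₀)ᵀ * br ξ₀).trace = ‖br ξ₀‖ ^ 2 := by
      rw [trace_eq_sum, norm_sq_eq_sum]
      congr 1; ext i; congr 1; ext j; ring
    simp only [htr]
    have : ‖br ξ₀‖ ^ 2 + (ξ₀.det - y) * (ξ₀.det - y) = Wf y ξ₀ ^ 2 := by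
      rw [Wf, Real.sq_sqrt (by positivity)]; ring
    rw [this, sq, mul_div_assoc, div_self (ne_of_gt hW0), mul_one]
end

section
/- Let A be a real 2×2 matrix with A₁₁ = 0, A₂₂ = 0 and A ≠ 0, and let t ∈ ℝ. For ν ≠ 0 set ξ_ν := A + ((t + A₁₂A₂₁)/ν) e₁⊗e₁ + ν e₂⊗e₂. Then det ξ_ν = t for every ν ≠ 0, and as ν → 0 the unit vectors ([ξ_ν], det ξ_ν − y)/W(ξ_ν) ∈ ℝ^{2×2} × ℝ converge to (A, t − y)/√(‖A‖² + (t − y)²). -/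
open Matrix Filter Topology

attribute [local instance] Matrix.frobeniusSeminormedAddCommGroup
  Matrix.frobeniusNormedAddCommGroup Matrix.frobeniusNormedSpace

/-- With A₁₁ = A₂₂ = 0, A ≠ 0, and ξ_ν := A + ((t + A₁₂A₂₁)/ν) e₁⊗e₁ + ν e₂⊗e₂ for
ν ≠ 0: det ξ_ν = t, and ([ξ_ν], det ξ_ν − y)/W(ξ_ν) → (A, t − y)/√(‖A‖² + (t − y)²)
as ν → 0. -/
theorem stmt_9 (y : ℝ) (hy : 0 < y) (A : M2) (h11 : A 0 0 = 0) (h22 : A 1 1 = 0)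
    (hA : A ≠ 0) (t : ℝ)
    (ξ : ℝ → M2) (hξ : ∀ ν : ℝ, ξ ν = A + ((t + A 0 1 * A 1 0) / ν) • E11 + ν • E22) :
    (∀ ν : ℝ, ν ≠ 0 → (ξ ν).det = t) ∧
    Tendsto (fun ν : ℝ => (Wf y (ξ ν))⁻¹ • ((br (ξ ν), (ξ ν).det - y) : M2 × ℝ))
      (𝓝[≠] 0)
      (𝓝 ((Real.sqrt (‖A‖ ^ 2 + (t - y) ^ 2))⁻¹ • ((A, t - y) : M2 × ℝ))) := by

  have hdet : ∀ ν : ℝ, ν ≠ 0 → (ξ ν).det = t := by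
    intro ν hν
    rw [hξ ν]
    simp only [Matrix.det_fin_two, E11, E22, Matrix.add_apply, Matrix.smul_apply,
      Matrix.single, Matrix.of_apply, h11, h22]
    norm_num
    field_simp
    ring
  refine ⟨hdet, ?_⟩
  have hbr : ∀ ν : ℝ, ν ≠ 0 → br (ξ ν) = A + ν • E22 := by
    intro ν hν
    rw [hξ ν, br]
    have h00 : (A + ((t + A 0 1 * A 1 0) / ν) • E11 + ν • E22) 0 0
        = (t + A 0 1 * A 1 0) / ν := by
      simp [E11, E22, Matrix.single, h11]
    rw [h00]
    abel
  have hApos : 0 < ‖A‖ := norm_pos_iff.mpr hA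
  have hc : 0 < ‖A‖ ^ 2 + (t - y) ^ 2 := by positivity
  have hsq : Real.sqrt (‖A‖ ^ 2 + (t - y) ^ 2) ≠ 0 :=
    ne_of_gt (Real.sqrt_pos.mpr hc)
  have h1 : Tendsto (fun ν : ℝ => A + ν • E22) (𝓝 0) (𝓝 A) := by
    have : Continuous fun ν : ℝ => A + ν • E22 := by continuity
    have := this.tendsto 0
    simpa using this
  have hg : Tendsto
      (fun ν : ℝ => (Real.sqrt (‖A + ν • E22‖ ^ 2 + (t - y) ^ 2))⁻¹ •
        ((A + ν • E22, t - y) : M2 × ℝ)) (𝓝 0)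
      (𝓝 ((Real.sqrt (‖A‖ ^ 2 + (t - y) ^ 2))⁻¹ • ((A, t - y) : M2 × ℝ))) := by
    have hnorm : Tendsto (fun ν : ℝ => Real.sqrt (‖A + ν • E22‖ ^ 2 + (t - y) ^ 2))
        (𝓝 0) (𝓝 (Real.sqrt (‖A‖ ^ 2 + (t - y) ^ 2))) := by
      exact (Real.continuous_sqrt.tendsto _).comp
        (((h1.norm.pow 2).add tendsto_const_nhds))
    exact (hnorm.inv₀ hsq).smul (h1.prodMk_nhds tendsto_const_nhds)
  refine Tendsto.congr' ?_ (hg.mono_left nhdsWithin_le_nhds)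
  filter_upwards [self_mem_nhdsWithin] with ν hν
  have hν : ν ≠ 0 := hν
  rw [Wf, hbr ν hν, hdet ν hν]
end

section
/- The convex hull of the set S := {(ξ, det ξ) : ξ ∈ ℝ^{2×2}} in ℝ^{2×2} × ℝ is the whole space ℝ^{2×2} × ℝ. -/
open Matrix Filter Topology

attribute [local instance] Matrix.frobeniusSeminormedAddCommGroup
  Matrix.frobeniusNormedAddCommGroup Matrix.frobeniusNormedSpace

/-- The convex hull of S = {(ξ, det ξ) : ξ ∈ ℝ^{2×2}} is all of ℝ^{2×2} × ℝ. -/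
theorem stmt_15 :
    convexHull ℝ {p : M2 × ℝ | ∃ ξ : M2, p = (ξ, ξ.det)} = Set.univ := by
  apply Set.eq_univ_of_univ_subset
  rintro ⟨ξ, y⟩ -
  set S : Set (M2 × ℝ) := {p : M2 × ℝ | ∃ ξ : M2, p = (ξ, ξ.det)} with hS
  set η : M2 := Matrix.of !![y - ξ.det, 0; 0, 1] with hη
  have hx : ((ξ + η, (ξ + η).det) : M2 × ℝ) ∈ S := ⟨_, rfl⟩
  have hy : ((ξ - η, (ξ - η).det) : M2 × ℝ) ∈ S := ⟨_, rfl⟩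
  have key : ((ξ, y) : M2 × ℝ) =
      (1/2 : ℝ) • ((ξ + η, (ξ + η).det) : M2 × ℝ)
        + (1/2 : ℝ) • ((ξ - η, (ξ - η).det) : M2 × ℝ) := by
    apply Prod.ext
    · show ξ = (1/2 : ℝ) • (ξ + η) + (1/2 : ℝ) • (ξ - η)
      module
    · show y = (1/2 : ℝ) * (ξ + η).det + (1/2 : ℝ) * (ξ - η).det
      simp [Matrix.det_fin_two, Matrix.add_apply, Matrix.sub_apply, show η 0 0 = y - ξ.det from rfl,
        show η 0 1 = 0 from rfl, show η 1 0 = 0 from rfl, show η 1 1 = 1 from rfl]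
      ring
  have : ((ξ, y) : M2 × ℝ) ∈ segment ℝ ((ξ + η, (ξ + η).det) : M2 × ℝ)
      ((ξ - η, (ξ - η).det) : M2 × ℝ) :=
    ⟨1/2, 1/2, by norm_num, by norm_num, by norm_num, key.symm⟩
  exact segment_subset_convexHull hx hy this
end
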